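/- Let 1 ≤ m ≤ p, and suppose u ∈ M_r^{(1)} satisfies v(−t,m)·u = 0 for all 1 ≤ t ≤ p with t ≠ m, and v(−m,m)·u = αm·u for some α ∈ ℂ. Then v(m,m)·(det V_p)·u = 2m²(2α + r − p + 1)·det(V_p^{(m)})·u + (det V_p)·v(m,m)·u, where V_p^{(m)} is obtained from V_p by deleting the m-th row and m-th column. -/

import Mathlib

/-- The contraction scalar `[v^j(n), v^l(t)] = δ_{j,l} δ_{n+t,0} n` of the Heisenberg
algebra (with `c = 1`). -/
def kapC {d : ℕ} (j l : Fin d) (n t : ℤ) : ℂ :=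
  if j = l ∧ n + t = 0 then (n : ℂ) else 0

/-- The scalar `σ(i,k,m,s)` such that `v^{ik}(m,s) = (normally ordered part) + σ(i,k,m,s)`:
it equals `m` when `i = k`, `s = −m` and `m > 0`, and `0` otherwise. -/
def sigC {d : ℕ} (i k : Fin d) (m s : ℤ) : ℂ :=
  if i = k ∧ m + s = 0 ∧ 0 < m then (m : ℂ) else 0

/-- A representation of (the universal enveloping algebra of) the Lie algebra `L_r` in an
associative `ℂ`-algebra `A`: a family of elements `ρ i j m n` playing the role of the
quadratic elements `v^{ij}(m,n)`, subject to the symmetry relations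
`v^{ij}(m,n) = v^{ji}(n,m)` (for `i ≠ j` or `m ≠ −n`), `v^{ii}(m,−m) = v^{ii}(−m,m) + m`,
and the commutation relations of `L_r`:
`[v^{ij}(m,n), v^{kl}(s,t)]_r = [b,d] v^{ik}(m,s) + [b,c] v^{il}(m,t) + [a,d] v^{kj}(s,n)
+ [a,c] v^{lj}(t,n) + (r−1)·(scalar part)`, i.e. the plain Wick-formula commutator of
`U(ĥ)/⟨c−1⟩` with its central (`π₂`) component multiplied by `r`. -/
structure LrAlg (d : ℕ) (r : ℂ) (A : Type*) [Ring A] [Algebra ℂ A] where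
  ρ : Fin d → Fin d → ℤ → ℤ → A
  symm : ∀ (i j : Fin d) (m n : ℤ), i ≠ j ∨ m ≠ -n → ρ i j m n = ρ j i n m
  symm' : ∀ (i : Fin d) (m : ℤ), ρ i i m (-m) = ρ i i (-m) m + algebraMap ℂ A (m : ℂ)
  comm : ∀ (i j k l : Fin d) (m n s t : ℤ),
    ρ i j m n * ρ k l s t - ρ k l s t * ρ i j m n
      = kapC j l n t • ρ i k m s + kapC j k n s • ρ i l m t
        + kapC i l m t • ρ k j s n + kapC i k m s • ρ l j t n
        + algebraMap ℂ A ((r - 1) *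
            (kapC j l n t * sigC i k m s + kapC j k n s * sigC i l m t
              + kapC i l m t * sigC k j s n + kapC i k m s * sigC l j t n))

/-- The determinant of the matrix `(w(−f(q), −f(q')))_{q,q'}` with (pairwise commuting)
entries in a possibly noncommutative ring, expanded as
`Σ_σ sgn(σ) Π_q w(−f(q), −f(σ(q)))`. -/
noncomputable def detOn {A : Type*} [Ring A] {k : ℕ} (w : ℤ → ℤ → A) (f : Fin k → ℤ) : A :=
  ∑ σ : Equiv.Perm (Fin k),
    ((Equiv.Perm.sign σ : ℤˣ) : ℤ) • (List.ofFn fun q => w (-(f q)) (-(f (σ q)))).prod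

theorem Equiv.Perm.apply_inv_self {α : Type*} (f : Equiv.Perm α) (x : α) : f (f⁻¹ x) = x :=
  f.apply_symm_apply x

theorem Equiv.Perm.inv_apply_self {α : Type*} (f : Equiv.Perm α) (x : α) : f⁻¹ (f x) = x :=
  f.symm_apply_apply x

section Aux

variable {d : ℕ} {r : ℂ} {A : Type*} [Ring A] [Algebra ℂ A]
variable (S : LrAlg d r A) (i : Fin d) (m : ℤ)

/-- `w s t = v(−s,−t)` -/
noncomputable def wS (s t : ℤ) : A := S.ρ i i (-s) (-t)
/-- `x a = v(−a, m)` -/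
noncomputable def xS (a : ℤ) : A := S.ρ i i (-a) m
/-- `E = v(m,m)` -/
noncomputable def ES : A := S.ρ i i m m

lemma kap_zero (n t : ℤ) (h : n + t ≠ 0) : kapC i i n t = 0 := by simp [kapC, h]

lemma kap_val (n t : ℤ) (h : n + t = 0) : kapC i i n t = (n : ℂ) := by simp [kapC, h]

lemma sig_zero (n t : ℤ) (h : n + t ≠ 0 ∨ ¬ 0 < n) : sigC i i n t = 0 := by
  rcases h with h | h <;> simp [sigC, h]

lemma w_symm {s t : ℤ} (hs : 1 ≤ s) (ht : 1 ≤ t) : wS S i s t = wS S i t s :=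
  S.symm i i (-s) (-t) (Or.inr (by omega))

lemma ww_comm {s t s' t' : ℤ} (hs : 1 ≤ s) (ht : 1 ≤ t) (hs' : 1 ≤ s') (ht' : 1 ≤ t') :
    wS S i s t * wS S i s' t' = wS S i s' t' * wS S i s t := by
  have h := S.comm i i i i (-s) (-t) (-s') (-t')
  rw [kap_zero i (-t) (-t') (by omega), kap_zero i (-t) (-s') (by omega),
    kap_zero i (-s) (-t') (by omega), kap_zero i (-s) (-s') (by omega)] at h
  simp only [zero_smul, zero_mul, add_zero, zero_add, mul_zero, map_zero] at h
  rw [sub_eq_zero] at h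
  exact h

lemma Ew_comm {s t : ℤ} (hs : 1 ≤ s) (ht : 1 ≤ t) (hsm : s ≠ m) (htm : t ≠ m) :
    ES S i m * wS S i s t = wS S i s t * ES S i m := by
  have h := S.comm i i i i m m (-s) (-t)
  rw [kap_zero i m (-t) (by omega), kap_zero i m (-s) (by omega)] at h
  simp only [zero_smul, zero_mul, add_zero, zero_add, mul_zero, map_zero] at h
  rw [sub_eq_zero] at h
  exact h

lemma Ew_m {s : ℤ} (hm : 1 ≤ m) (hs : 1 ≤ s) (hsm : s ≠ m) :
    ES S i m * wS S i s m = wS S i s m * ES S i m + ((2 * m : ℤ) : ℂ) • xS S i m s := by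
  have h := S.comm i i i i m m (-s) (-m)
  rw [kap_val i m (-m) (by omega), kap_zero i m (-s) (by omega),
    sig_zero i m (-s) (Or.inl (by omega)), sig_zero i (-s) m (Or.inr (by omega))] at h
  have hsym : S.ρ i i m (-s) = S.ρ i i (-s) m := S.symm i i m (-s) (Or.inr (by omega))
  rw [hsym] at h
  simp only [zero_smul, zero_mul, add_zero, zero_add, mul_zero, map_zero] at h
  unfold ES wS xS
  push_cast
  linear_combination (norm := module) h

lemma Ew_mm (hm : 1 ≤ m) :
    ES S i m * wS S i m m = wS S i m m * ES S i m + ((4 * m : ℤ) : ℂ) • xS S i m m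
      + algebraMap ℂ A (2 * r * (m : ℂ) ^ 2) := by
  have h := S.comm i i i i m m (-m) (-m)
  rw [kap_val i m (-m) (by omega), sig_zero i (-m) m (Or.inr (by omega))] at h
  have hsig : sigC i i m (-m) = (m : ℂ) := by simp [sigC]; omega
  rw [hsig, S.symm' i m] at h
  unfold ES wS xS
  simp only [Algebra.algebraMap_eq_smul_one] at h ⊢
  push_cast at h ⊢
  linear_combination (norm := module) h

lemma xw_comm {a s t : ℤ} (hm : 1 ≤ m) (ha : 1 ≤ a) (hs : 1 ≤ s) (ht : 1 ≤ t)
    (hsm : s ≠ m) (htm : t ≠ m) :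
    xS S i m a * wS S i s t = wS S i s t * xS S i m a := by
  have h := S.comm i i i i (-a) m (-s) (-t)
  rw [kap_zero i m (-t) (by omega), kap_zero i m (-s) (by omega),
    kap_zero i (-a) (-t) (by omega), kap_zero i (-a) (-s) (by omega)] at h
  simp only [zero_smul, zero_mul, add_zero, zero_add, mul_zero, map_zero] at h
  rw [sub_eq_zero] at h
  exact h

lemma xw_m {a s : ℤ} (hm : 1 ≤ m) (ha : 1 ≤ a) (hs : 1 ≤ s) (hsm : s ≠ m) :
    xS S i m a * wS S i s m = wS S i s m * xS S i m a + ((m : ℤ) : ℂ) • wS S i a s := by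
  have h := S.comm i i i i (-a) m (-s) (-m)
  rw [kap_val i m (-m) (by omega), kap_zero i m (-s) (by omega),
    kap_zero i (-a) (-m) (by omega), kap_zero i (-a) (-s) (by omega),
    sig_zero i (-a) (-s) (Or.inl (by omega))] at h
  simp only [zero_smul, zero_mul, add_zero, zero_add, mul_zero, map_zero] at h
  unfold xS wS
  push_cast
  linear_combination (norm := module) h

end Aux

section Comm

variable {d : ℕ} {r : ℂ} {A : Type*} [Ring A] [Algebra ℂ A]
variable (S : LrAlg d r A) (i : Fin d) (m : ℤ)

/-- The set of all `v(−s,−t)`, `s,t ≥ 1`. -/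
def wSet : Set A := {a | ∃ s t : ℤ, 1 ≤ s ∧ 1 ≤ t ∧ a = wS S i s t}

noncomputable instance : CommRing ↥(Algebra.adjoin ℂ (wSet S i)) :=
  Algebra.adjoinCommRingOfComm ℂ (by
    rintro a ⟨s, t, hs, ht, rfl⟩ b ⟨s', t', hs', ht', rfl⟩
    exact ww_comm S i hs ht hs' ht')

/-- The matrix entry `v(−s,−t)` as an element of the commutative subalgebra. -/
noncomputable def WC (s t : ℤ) : ↥(Algebra.adjoin ℂ (wSet S i)) :=
  if h : 1 ≤ s ∧ 1 ≤ t then ⟨wS S i s t, Algebra.subset_adjoin ⟨s, t, h.1, h.2, rfl⟩⟩ else 1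

lemma WC_coe {s t : ℤ} (hs : 1 ≤ s) (ht : 1 ≤ t) : (↑(WC S i s t) : A) = wS S i s t := by
  rw [WC, dif_pos ⟨hs, ht⟩]

lemma WC_symm {s t : ℤ} (hs : 1 ≤ s) (ht : 1 ≤ t) : WC S i s t = WC S i t s := by
  apply Subtype.ext
  rw [WC_coe S i hs ht, WC_coe S i ht hs]
  exact w_symm S i hs ht

lemma comm_P (hm : 1 ≤ m) {k : ℕ} (T : Finset (Fin k)) (f g : Fin k → ℤ)
    (hT : ∀ q ∈ T, (1 ≤ f q ∧ f q ≠ m) ∧ (1 ≤ g q ∧ g q ≠ m)) :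
    (ES S i m * (↑(∏ q ∈ T, WC S i (f q) (g q)) : A)
        = (↑(∏ q ∈ T, WC S i (f q) (g q)) : A) * ES S i m)
    ∧ ∀ a : ℤ, 1 ≤ a →
      xS S i m a * (↑(∏ q ∈ T, WC S i (f q) (g q)) : A)
        = (↑(∏ q ∈ T, WC S i (f q) (g q)) : A) * xS S i m a := by
  refine Finset.prod_induction _
    (fun c : ↥(Algebra.adjoin ℂ (wSet S i)) => (ES S i m * (↑c : A) = (↑c : A) * ES S i m)
      ∧ ∀ a : ℤ, 1 ≤ a → xS S i m a * (↑c : A) = (↑c : A) * xS S i m a) ?_ ?_ ?_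
  · rintro a b ⟨ha1, ha2⟩ ⟨hb1, hb2⟩
    constructor
    · push_cast
      rw [← mul_assoc, ha1, mul_assoc, hb1, mul_assoc]
    · intro c hc
      push_cast
      rw [← mul_assoc, ha2 c hc, mul_assoc, hb2 c hc, mul_assoc]
  · constructor
    · push_cast
      rw [mul_one, one_mul]
    · intro c hc
      push_cast
      rw [mul_one, one_mul]
  · intro q hq
    obtain ⟨⟨hf1, hf2⟩, hg1, hg2⟩ := hT q hq
    rw [WC_coe S i hf1 hg1]
    exact ⟨Ew_comm S i m hf1 hg1 hf2 hg2,
      fun a ha => xw_comm S i m hm ha hf1 hg1 hf2 hg2⟩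

lemma detOn_eq {k : ℕ} (f : Fin k → ℤ) (hf : ∀ q, 1 ≤ f q) :
    detOn (fun a b => S.ρ i i a b) f
      = ∑ σ : Equiv.Perm (Fin k), ((Equiv.Perm.sign σ : ℤˣ) : ℤ) •
          (↑(∏ q, WC S i (f q) (f (σ q))) : A) := by
  unfold detOn
  refine Finset.sum_congr rfl fun σ _ => ?_
  congr 1
  have : (List.ofFn fun q => S.ρ i i (-f q) (-f (σ q)))
      = List.map (Subalgebra.val _) (List.ofFn fun q => WC S i (f q) (f (σ q))) := by
    rw [List.map_ofFn]
    congr 1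
    funext q
    simp only [Function.comp_apply, Subalgebra.coe_val]
    rw [WC_coe S i (hf q) (hf (σ q))]
    rfl
  rw [this]
  have h2 : (List.map (⇑(Algebra.adjoin ℂ (wSet S i)).val)
        (List.ofFn fun q => WC S i (f q) (f (σ q)))).prod
      = (((List.ofFn fun q => WC S i (f q) (f (σ q))).prod : _) : A) := by
    rw [SubmonoidClass.coe_list_prod]
    rfl
  rw [h2, List.prod_ofFn]

end Comm

section Skip

variable (p : ℕ) (m : ℤ)

/-- the index `m` as element of `Fin p` (0-based). -/
def mhat (h1 : 1 ≤ m) (h2 : m ≤ (p : ℤ)) : Fin p := ⟨(m - 1).toNat, by omega⟩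

variable (h1 : 1 ≤ m) (h2 : m ≤ (p : ℤ))

lemma mhat_coe : ((mhat p m h1 h2 : Fin p) : ℤ) + 1 = m := by
  simp only [mhat]
  omega

/-- the strictly monotone map `Fin (p-1) → Fin p` skipping `m−1`. -/
def skipF (q : Fin (p - 1)) : Fin p :=
  if (q : ℕ) < (m - 1).toNat then ⟨q, by have := q.isLt; omega⟩
  else ⟨(q : ℕ) + 1, by have := q.isLt; omega⟩

lemma skipF_ne (q : Fin (p - 1)) : skipF p m q ≠ mhat p m h1 h2 := by
  have := q.isLt
  unfold skipF mhat
  split <;> (apply Fin.ne_of_val_ne; simp; omega)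

lemma skipF_coe (q : Fin (p - 1)) :
    ((skipF p m q : Fin p) : ℤ) + 1
      = if ((q : ℕ) : ℤ) + 1 < m then ((q : ℕ) : ℤ) + 1 else ((q : ℕ) : ℤ) + 2 := by
  unfold skipF
  split <;> (simp; omega)

/-- The equivalence `Fin (p-1) ≃ {q : Fin p // q ≠ mhat}`. -/
noncomputable def eskip : Fin (p - 1) ≃ {q : Fin p // q ≠ mhat p m h1 h2} :=
  Equiv.ofBijective (fun q => ⟨skipF p m q, skipF_ne p m h1 h2 q⟩) (by
    rw [Fintype.bijective_iff_injective_and_card]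
    constructor
    · intro a b hab
      have h := congrArg (fun z => ((z : {q : Fin p // q ≠ mhat p m h1 h2}) : Fin p).val) hab
      have ha := a.isLt
      have hb := b.isLt
      simp only [skipF] at h
      apply Fin.ext
      split_ifs at h <;> simp at h <;> omega
    · have : Fintype.card {q : Fin p // q ≠ mhat p m h1 h2}
          = Fintype.card (Fin p) - Fintype.card {q : Fin p // q = mhat p m h1 h2} :=
        Fintype.card_subtype_compl _
      rw [Fintype.card_fin, this, Fintype.card_subtype_eq, Fintype.card_fin])

lemma eskip_coe (q : Fin (p - 1)) : ((eskip p m h1 h2 q : {q : Fin p // _}) : Fin p) = skipF p m q := rfl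

end Skip

section Main

variable {d : ℕ} {r : ℂ} {M : Type*} [AddCommGroup M] [Module ℂ M]
variable (S : LrAlg d r (Module.End ℂ M)) (i : Fin d)
variable (p : ℕ) (m : ℤ) (h1 : 1 ≤ m) (h2 : m ≤ (p : ℤ))

/-- the full monomial of `det V_p` attached to `σ`. -/
noncomputable def PPfull (σ : Equiv.Perm (Fin p)) :=
  ∏ q : Fin p, WC S i ((q : ℤ) + 1) (((σ q : Fin p) : ℤ) + 1)

/-- the minor monomial attached to `τ`. -/
noncomputable def PPm (τ : Equiv.Perm (Fin p)) :=
  ∏ q ∈ Finset.univ.erase (mhat p m h1 h2), WC S i ((q : ℤ) + 1) (((τ q : Fin p) : ℤ) + 1)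

lemma ne_mhat_iff (q : Fin p) : q ≠ mhat p m h1 h2 ↔ ((q : ℤ) + 1) ≠ m := by
  simp only [Ne, Fin.ext_iff, mhat]
  omega

lemma caseA (hm : 1 ≤ m) (u : M) (α : ℂ) (hu2 : xS S i m m u = (α * (m : ℂ)) • u)
    (σ : Equiv.Perm (Fin p)) (hfix : σ (mhat p m h1 h2) = mhat p m h1 h2) :
    ES S i m ((↑(PPfull S i p σ) : Module.End ℂ M) u)
      = (↑(PPfull S i p σ) : Module.End ℂ M) (ES S i m u)
        + ((4 * α + 2 * r) * (m : ℂ) ^ 2) • ((↑(PPm S i p m h1 h2 σ) : Module.End ℂ M) u) := by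
  have hsplit : PPfull S i p σ = PPm S i p m h1 h2 σ * WC S i m m := by
    unfold PPfull PPm
    rw [← Finset.prod_erase_mul Finset.univ _ (Finset.mem_univ (mhat p m h1 h2))]
    rw [hfix, mhat_coe p m h1 h2]
  have hcomm : ES S i m * (↑(PPm S i p m h1 h2 σ) : Module.End ℂ M)
      = (↑(PPm S i p m h1 h2 σ) : Module.End ℂ M) * ES S i m :=
    (comm_P S i m hm (Finset.univ.erase (mhat p m h1 h2))
    (fun q => (q : ℤ) + 1) (fun q => ((σ q : Fin p) : ℤ) + 1)
    (fun q hq => by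
      have hq1 : q ≠ mhat p m h1 h2 := Finset.ne_of_mem_erase hq
      have hq2 : σ q ≠ mhat p m h1 h2 := fun h =>
        hq1 (σ.injective (h.trans hfix.symm))
      have b1 := (ne_mhat_iff p m h1 h2 q).mp hq1
      have b2 := (ne_mhat_iff p m h1 h2 (σ q)).mp hq2
      refine ⟨⟨by omega, b1⟩, ⟨by omega, b2⟩⟩)).1
  have hcoe : (↑(PPfull S i p σ) : Module.End ℂ M)
      = (↑(PPm S i p m h1 h2 σ) : Module.End ℂ M) * wS S i m m := by
    rw [hsplit, MulMemClass.coe_mul, WC_coe S i hm hm]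
  have hEw := congrArg (fun T : Module.End ℂ M => T u) (Ew_mm S i m hm)
  simp only [Module.End.mul_apply, LinearMap.add_apply, LinearMap.smul_apply,
    Module.algebraMap_end_apply] at hEw
  have hPE := congrArg (fun T : Module.End ℂ M => T (wS S i m m u)) hcomm
  simp only [Module.End.mul_apply] at hPE
  rw [hcoe]
  simp only [Module.End.mul_apply]
  rw [hPE, hEw]
  rw [map_add, map_add, map_smul, map_smul, hu2, map_smul]
  push_cast
  match_scalars <;> ring

lemma caseB (hm : 1 ≤ m) (u : M)
    (hu1 : ∀ t : ℤ, 1 ≤ t → t ≤ (p : ℤ) → t ≠ m → xS S i m t u = 0)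
    (σ : Equiv.Perm (Fin p)) (hnf : σ (mhat p m h1 h2) ≠ mhat p m h1 h2) :
    ES S i m ((↑(PPfull S i p σ) : Module.End ℂ M) u)
      = (↑(PPfull S i p σ) : Module.End ℂ M) (ES S i m u)
        + (2 * (m : ℂ) ^ 2) •
          ((↑(PPm S i p m h1 h2 (σ * Equiv.swap (mhat p m h1 h2) (σ⁻¹ (mhat p m h1 h2))))
            : Module.End ℂ M) u) := by
  have hmZ : ((mhat p m h1 h2 : Fin p) : ℤ) + 1 = m := mhat_coe p m h1 h2
  set mh := mhat p m h1 h2 with hmh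
  set a := σ⁻¹ mh with ha'
  set bq := σ mh with hb'
  have haσ : σ a = mh := Equiv.Perm.apply_inv_self σ mh
  have hane : a ≠ mh := by
    intro h
    have hx : σ a = σ mh := by rw [h]
    rw [haσ] at hx
    exact hnf (hb'.trans hx.symm)
  have hbne : bq ≠ mh := hnf
  have haZ1 : (1 : ℤ) ≤ (a : ℤ) + 1 := by omega
  have haZp : (a : ℤ) + 1 ≤ (p : ℤ) := by have := a.isLt; omega
  have haZm : (a : ℤ) + 1 ≠ m := (ne_mhat_iff p m h1 h2 a).mp hane
  have hbZ1 : (1 : ℤ) ≤ (bq : ℤ) + 1 := by omega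
  have hbZp : (bq : ℤ) + 1 ≤ (p : ℤ) := by have := bq.isLt; omega
  have hbZm : (bq : ℤ) + 1 ≠ m := (ne_mhat_iff p m h1 h2 bq).mp hbne
  set τ : Equiv.Perm (Fin p) := σ * Equiv.swap mh a with hτ'
  have hτa : τ a = bq := by
    rw [hτ', Equiv.Perm.mul_apply, Equiv.swap_apply_right, hb']
  have hτq : ∀ q : Fin p, q ≠ mh → q ≠ a → τ q = σ q := by
    intro q hq1 hq2
    rw [hτ', Equiv.Perm.mul_apply, Equiv.swap_apply_of_ne_of_ne hq1 hq2]
  have hamem : a ∈ Finset.univ.erase mh := Finset.mem_erase.mpr ⟨hane, Finset.mem_univ a⟩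
  set QQ := ∏ q ∈ (Finset.univ.erase mh).erase a,
      WC S i ((q : ℤ) + 1) (((σ q : Fin p) : ℤ) + 1) with hQQ
  have hsplit : PPfull S i p σ = QQ * WC S i m ((bq : ℤ) + 1) * WC S i ((a : ℤ) + 1) m := by
    unfold PPfull
    rw [← Finset.mul_prod_erase Finset.univ _ (Finset.mem_univ mh),
      ← Finset.mul_prod_erase (Finset.univ.erase mh) _ hamem, haσ, hmZ]
    rw [← hb', ← hQQ]
    ring
  have hsplitm : PPm S i p m h1 h2 τ = QQ * WC S i ((bq : ℤ) + 1) ((a : ℤ) + 1) := by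
    unfold PPm
    rw [← Finset.mul_prod_erase (Finset.univ.erase mh) _ hamem, hτa]
    have hrest : ∏ q ∈ (Finset.univ.erase mh).erase a,
        WC S i ((q : ℤ) + 1) (((τ q : Fin p) : ℤ) + 1) = QQ := by
      refine Finset.prod_congr rfl fun q hq => ?_
      obtain ⟨hq2, hq3⟩ := Finset.mem_erase.mp hq
      rw [hτq q (Finset.mem_erase.mp hq3).1 hq2]
    rw [hrest, WC_symm S i haZ1 hbZ1]
    ring
  have hcomm : ES S i m * (↑QQ : Module.End ℂ M) = (↑QQ : Module.End ℂ M) * ES S i m :=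
    (comm_P S i m hm ((Finset.univ.erase mh).erase a)
    (fun q => (q : ℤ) + 1) (fun q => ((σ q : Fin p) : ℤ) + 1)
    (fun q hq => by
      obtain ⟨hq2, hq3⟩ := Finset.mem_erase.mp hq
      have hq1 : q ≠ mh := (Finset.mem_erase.mp hq3).1
      have hq4 : σ q ≠ mh := by
        intro h
        exact hq2 (σ.injective (h.trans haσ.symm))
      have b1 := (ne_mhat_iff p m h1 h2 q).mp hq1
      have b2 := (ne_mhat_iff p m h1 h2 (σ q)).mp hq4
      refine ⟨⟨by omega, b1⟩, ⟨by omega, b2⟩⟩)).1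
  have hcoe : (↑(PPfull S i p σ) : Module.End ℂ M)
      = (↑QQ : Module.End ℂ M) * (wS S i m ((bq : ℤ) + 1) * wS S i ((a : ℤ) + 1) m) := by
    rw [hsplit, MulMemClass.coe_mul, MulMemClass.coe_mul, WC_coe S i hm hbZ1,
      WC_coe S i haZ1 hm, mul_assoc]
  have hcoem : (↑(PPm S i p m h1 h2 τ) : Module.End ℂ M)
      = (↑QQ : Module.End ℂ M) * wS S i ((bq : ℤ) + 1) ((a : ℤ) + 1) := by
    rw [hsplitm, MulMemClass.coe_mul, WC_coe S i hbZ1 haZ1]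
  have hsymb : wS S i m ((bq : ℤ) + 1) = wS S i ((bq : ℤ) + 1) m := w_symm S i hm hbZ1
  have hEwb := congrArg (fun T : Module.End ℂ M => T (wS S i ((a : ℤ) + 1) m u))
    (Ew_m S i m hm hbZ1 hbZm)
  simp only [Module.End.mul_apply, LinearMap.add_apply, LinearMap.smul_apply] at hEwb
  have hEwa := congrArg (fun T : Module.End ℂ M => T u) (Ew_m S i m hm haZ1 haZm)
  simp only [Module.End.mul_apply, LinearMap.add_apply, LinearMap.smul_apply] at hEwa
  rw [hu1 ((a : ℤ) + 1) haZ1 haZp haZm, smul_zero, add_zero] at hEwa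
  have hxwb := congrArg (fun T : Module.End ℂ M => T u) (xw_m S i m hm hbZ1 haZ1 haZm)
  simp only [Module.End.mul_apply, LinearMap.add_apply, LinearMap.smul_apply] at hxwb
  rw [hu1 ((bq : ℤ) + 1) hbZ1 hbZp hbZm, map_zero, zero_add] at hxwb
  have hPE := congrArg
    (fun T : Module.End ℂ M => T (wS S i ((bq : ℤ) + 1) m (wS S i ((a : ℤ) + 1) m u))) hcomm
  simp only [Module.End.mul_apply] at hPE
  rw [hcoe, hcoem]
  simp only [Module.End.mul_apply, hsymb]
  rw [hPE, hEwb, hEwa, hxwb]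
  rw [map_add, map_smul, map_smul]
  push_cast
  match_scalars <;> ring

/-- decomposition of a permutation as (value at `mh`, permutation fixing `mh`). -/
def PhiE (mh : Fin p) : Equiv.Perm (Fin p) ≃ (Fin p) × {τ : Equiv.Perm (Fin p) // τ mh = mh} where
  toFun σ := (σ mh, ⟨σ * Equiv.swap mh (σ⁻¹ mh), by
    rw [Equiv.Perm.mul_apply, Equiv.swap_apply_left, Equiv.Perm.apply_inv_self]⟩)
  invFun bτ := bτ.2.1 * Equiv.swap mh (bτ.2.1⁻¹ bτ.1)
  left_inv σ := by
    simp only []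
    have h1 : (σ * Equiv.swap mh (σ⁻¹ mh))⁻¹ (σ mh) = σ⁻¹ mh := by
      rw [mul_inv_rev, Equiv.Perm.mul_apply, Equiv.Perm.inv_apply_self, Equiv.swap_inv,
        Equiv.swap_apply_left]
    rw [h1, mul_assoc, Equiv.swap_mul_self, mul_one]
  right_inv bτ := by
    obtain ⟨b, τ, hτ⟩ := bτ
    have hτi : τ⁻¹ mh = mh := by
      conv_lhs => rw [← hτ]
      rw [Equiv.Perm.inv_apply_self]
    have hb : (τ * Equiv.swap mh (τ⁻¹ b)) mh = b := by
      rw [Equiv.Perm.mul_apply, Equiv.swap_apply_left, Equiv.Perm.apply_inv_self]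
    have hcomp : (τ * Equiv.swap mh (τ⁻¹ b))⁻¹ mh = τ⁻¹ b := by
      rw [mul_inv_rev, Equiv.Perm.mul_apply, Equiv.swap_inv, hτi, Equiv.swap_apply_left]
    refine Prod.ext hb (Subtype.ext ?_)
    simp only []
    rw [hcomp, mul_assoc, Equiv.swap_mul_self, mul_one]

lemma minor_det :
    detOn (fun a b => S.ρ i i a b)
        (fun q : Fin (p - 1) => if ((q : ℕ) : ℤ) + 1 < m then ((q : ℕ) : ℤ) + 1
          else ((q : ℕ) : ℤ) + 2)
      = ∑ τ : {τ : Equiv.Perm (Fin p) // τ (mhat p m h1 h2) = mhat p m h1 h2},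
          ((Equiv.Perm.sign τ.1 : ℤˣ) : ℤ) •
            (↑(PPm S i p m h1 h2 τ.1) : Module.End ℂ M) := by
  rw [detOn_eq S i _ (fun q => by
    have : (1 : ℤ) ≤ if ((q : ℕ) : ℤ) + 1 < m then ((q : ℕ) : ℤ) + 1
        else ((q : ℕ) : ℤ) + 2 := by split <;> omega
    exact this)]
  refine Fintype.sum_bijective
    (fun ρ : Equiv.Perm (Fin (p - 1)) =>
      (⟨ρ.extendDomain (eskip p m h1 h2), by
        rw [Equiv.Perm.extendDomain_apply_not_subtype]
        simp⟩ :
        {τ : Equiv.Perm (Fin p) // τ (mhat p m h1 h2) = mhat p m h1 h2}))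
    ⟨fun ρ1 ρ2 h12 => ?_, fun τ => ?_⟩ _ _ (fun ρ => ?_)
  · have hval : ρ1.extendDomain (eskip p m h1 h2) = ρ2.extendDomain (eskip p m h1 h2) :=
      congrArg Subtype.val h12
    apply Equiv.ext
    intro q
    have e3 : ((eskip p m h1 h2) (ρ1 q) : Fin p) = ((eskip p m h1 h2) (ρ2 q) : Fin p) := by
      rw [← Equiv.Perm.extendDomain_apply_image ρ1 (eskip p m h1 h2) q,
        ← Equiv.Perm.extendDomain_apply_image ρ2 (eskip p m h1 h2) q, hval]
    exact (eskip p m h1 h2).injective (Subtype.coe_injective e3)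
  · obtain ⟨τ, hτ⟩ := τ
    have hpres : ∀ q : Fin p, q ≠ mhat p m h1 h2 ↔ τ q ≠ mhat p m h1 h2 := by
      intro q
      constructor
      · intro hq h
        exact hq (τ.injective (h.trans hτ.symm))
      · intro hq h
        exact hq (by rw [h, hτ])
    refine ⟨(eskip p m h1 h2).permCongr.symm (τ.subtypePerm (fun q => (hpres q).symm)), Subtype.ext ?_⟩
    ext q
    by_cases hq : q = mhat p m h1 h2
    · rw [hq, Equiv.Perm.extendDomain_apply_not_subtype _ _ (by simp), hτ]
    · have : q = ((eskip p m h1 h2) ((eskip p m h1 h2).symm ⟨q, hq⟩) : Fin p) := by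
        rw [Equiv.apply_symm_apply]
      rw [this, Equiv.Perm.extendDomain_apply_image]
      simp [Equiv.permCongr_apply]
  · dsimp only
    congr 1
    · rw [Equiv.Perm.sign_extendDomain]
    · congr 1
      unfold PPm
      refine Finset.prod_bij (fun q _ => skipF p m q) ?_ ?_ ?_ ?_
      · intro q _
        exact Finset.mem_erase.mpr ⟨skipF_ne p m h1 h2 q, Finset.mem_univ _⟩
      · intro q1 _ q2 _ h12
        have h12' : skipF p m q1 = skipF p m q2 := h12
        have hv := congrArg Fin.val h12' 
        have i1 := q1.isLt
        have i2 := q2.isLt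
        unfold skipF at hv
        apply Fin.ext
        split_ifs at hv <;> simp at hv <;> omega
      · intro b hb
        obtain ⟨hb1, _⟩ := Finset.mem_erase.mp hb
        refine ⟨(eskip p m h1 h2).symm ⟨b, hb1⟩, Finset.mem_univ _, ?_⟩
        have := congrArg (Subtype.val) (Equiv.apply_symm_apply (eskip p m h1 h2) ⟨b, hb1⟩)
        exact this
      · intro q _
        have hc1 := skipF_coe p m q
        have hc2 := skipF_coe p m (ρ q)
        have himg : (ρ.extendDomain (eskip p m h1 h2)) (skipF p m q) = skipF p m (ρ q) :=
          Equiv.Perm.extendDomain_apply_image ρ (eskip p m h1 h2) q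
        rw [himg, hc1, hc2]

include h1 h2 in
lemma master (hm : 1 ≤ m) (u : M) (α : ℂ)
    (hu1 : ∀ t : ℤ, 1 ≤ t → t ≤ (p : ℤ) → t ≠ m → xS S i m t u = 0)
    (hu2 : xS S i m m u = (α * (m : ℂ)) • u) :
    ES S i m ((detOn (fun a b => S.ρ i i a b) (fun q : Fin p => ((q : ℕ) : ℤ) + 1)) u)
      = (2 * (m : ℂ) ^ 2 * (2 * α + r - (p : ℂ) + 1)) •
          ((detOn (fun a b => S.ρ i i a b)
            (fun q : Fin (p - 1) => if ((q : ℕ) : ℤ) + 1 < m then ((q : ℕ) : ℤ) + 1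
              else ((q : ℕ) : ℤ) + 2)) u)
        + (detOn (fun a b => S.ρ i i a b) (fun q : Fin p => ((q : ℕ) : ℤ) + 1))
            (ES S i m u) := by
  have hdet : detOn (fun a b => S.ρ i i a b) (fun q : Fin p => ((q : ℕ) : ℤ) + 1)
      = ∑ σ : Equiv.Perm (Fin p), ((Equiv.Perm.sign σ : ℤˣ) : ℤ) •
          (↑(PPfull S i p σ) : Module.End ℂ M) :=
    detOn_eq S i _ (fun q => by omega)
  set mh := mhat p m h1 h2 with hmh
  set K : ℂ := 2 * (m : ℂ) ^ 2 * (2 * α + r - (p : ℂ) + 1) with hK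
  -- the per-permutation identity
  have key : ∀ σ : Equiv.Perm (Fin p),
      ES S i m ((↑(PPfull S i p σ) : Module.End ℂ M) u)
        = (↑(PPfull S i p σ) : Module.End ℂ M) (ES S i m u)
          + (if σ mh = mh then (4 * α + 2 * r) * (m : ℂ) ^ 2 else 2 * (m : ℂ) ^ 2) •
            ((↑(PPm S i p m h1 h2 (σ * Equiv.swap mh (σ⁻¹ mh))) : Module.End ℂ M) u) := by
    intro σ
    by_cases h : σ mh = mh
    · have hinv : σ⁻¹ mh = mh := by
        conv_lhs => rw [← h]
        rw [Equiv.Perm.inv_apply_self]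
      have hid : σ * Equiv.swap mh (σ⁻¹ mh) = σ := by
        rw [hinv, Equiv.swap_self, ← Equiv.Perm.one_def, mul_one]
      rw [if_pos h, hid]
      exact caseA S i p m h1 h2 hm u α hu2 σ h
    · rw [if_neg h]
      exact caseB S i p m h1 h2 hm u hu1 σ h
  -- expand the determinant applied to a vector
  have expand : ∀ v : M,
      (∑ σ : Equiv.Perm (Fin p), ((Equiv.Perm.sign σ : ℤˣ) : ℤ) •
          (↑(PPfull S i p σ) : Module.End ℂ M)) v
        = ∑ σ : Equiv.Perm (Fin p), ((Equiv.Perm.sign σ : ℤˣ) : ℤ) •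
            ((↑(PPfull S i p σ) : Module.End ℂ M) v) := by
    intro v
    rw [LinearMap.coe_sum, Finset.sum_apply]
    simp only [LinearMap.smul_apply]
  rw [hdet, expand u, map_sum]
  simp only [map_zsmul]
  have step2 : ∀ σ : Equiv.Perm (Fin p),
      ((Equiv.Perm.sign σ : ℤˣ) : ℤ) • (ES S i m ((↑(PPfull S i p σ) : Module.End ℂ M) u))
        = ((Equiv.Perm.sign σ : ℤˣ) : ℤ) •
            ((↑(PPfull S i p σ) : Module.End ℂ M) (ES S i m u))
          + (((Equiv.Perm.sign σ : ℤˣ) : ℤ) : ℂ) •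
              (if σ mh = mh then (4 * α + 2 * r) * (m : ℂ) ^ 2 else 2 * (m : ℂ) ^ 2) •
              ((↑(PPm S i p m h1 h2 (σ * Equiv.swap mh (σ⁻¹ mh))) : Module.End ℂ M) u) := by
    intro σ
    rw [key σ, smul_add, Int.cast_smul_eq_zsmul]
  rw [Finset.sum_congr rfl (fun σ _ => step2 σ), Finset.sum_add_distrib]
  conv_lhs => rw [add_comm]
  congr 1
  rotate_left
  · rw [expand (ES S i m u)]
  -- the correction sum
  rw [minor_det S i p m h1 h2]
  have expand2 : (∑ τ : {τ : Equiv.Perm (Fin p) // τ mh = mh},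
        ((Equiv.Perm.sign τ.1 : ℤˣ) : ℤ) •
          (↑(PPm S i p m h1 h2 τ.1) : Module.End ℂ M)) u
      = ∑ τ : {τ : Equiv.Perm (Fin p) // τ mh = mh},
          ((Equiv.Perm.sign τ.1 : ℤˣ) : ℤ) •
            ((↑(PPm S i p m h1 h2 τ.1) : Module.End ℂ M) u) := by
    rw [LinearMap.coe_sum, Finset.sum_apply]
    simp only [LinearMap.smul_apply]
  rw [expand2, Finset.smul_sum]
  set g : Equiv.Perm (Fin p) → M := fun σ =>
    (((Equiv.Perm.sign σ : ℤˣ) : ℤ) : ℂ) •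
      (if σ mh = mh then (4 * α + 2 * r) * (m : ℂ) ^ 2 else 2 * (m : ℂ) ^ 2) •
        ((↑(PPm S i p m h1 h2 (σ * Equiv.swap mh (σ⁻¹ mh))) : Module.End ℂ M) u) with hg
  rw [show (∑ σ : Equiv.Perm (Fin p),
      (((Equiv.Perm.sign σ : ℤˣ) : ℤ) : ℂ) •
        (if σ mh = mh then (4 * α + 2 * r) * (m : ℂ) ^ 2 else 2 * (m : ℂ) ^ 2) •
          ((↑(PPm S i p m h1 h2 (σ * Equiv.swap mh (σ⁻¹ mh))) : Module.End ℂ M) u))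
      = ∑ σ : Equiv.Perm (Fin p), g σ from rfl]
  rw [← Equiv.sum_comp (PhiE p mh).symm g, Fintype.sum_prod_type]
  have hval : ∀ (b : Fin p) (τ : {τ : Equiv.Perm (Fin p) // τ mh = mh}),
      g ((PhiE p mh).symm (b, τ))
        = (if b = mh
            then (((Equiv.Perm.sign τ.1 : ℤˣ) : ℤ) : ℂ) * ((4 * α + 2 * r) * (m : ℂ) ^ 2)
            else -(((Equiv.Perm.sign τ.1 : ℤˣ) : ℤ) : ℂ) * (2 * (m : ℂ) ^ 2)) •
          ((↑(PPm S i p m h1 h2 τ.1) : Module.End ℂ M) u) := by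
    intro b τ
    obtain ⟨τ0, hτ0⟩ := τ
    have hσ' : (PhiE p mh).symm (b, ⟨τ0, hτ0⟩) = τ0 * Equiv.swap mh (τ0⁻¹ b) := rfl
    have hrt := (PhiE p mh).apply_symm_apply (b, ⟨τ0, hτ0⟩)
    have hb2 : (τ0 * Equiv.swap mh (τ0⁻¹ b)) mh = b := congrArg Prod.fst hrt
    have hfc : (τ0 * Equiv.swap mh (τ0⁻¹ b)) *
        Equiv.swap mh ((τ0 * Equiv.swap mh (τ0⁻¹ b))⁻¹ mh) = τ0 :=
      congrArg (fun x => ((x.2 : {τ : Equiv.Perm (Fin p) // τ mh = mh})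
        : Equiv.Perm (Fin p))) hrt
    have hτi : τ0⁻¹ mh = mh := by
      have h' := congrArg (fun z => τ0⁻¹ z) hτ0
      simp only [Equiv.Perm.inv_apply_self] at h'
      exact h'.symm
    rw [hg]
    simp only []
    rw [hσ', hfc, hb2]
    by_cases hbm : b = mh
    · rw [if_pos hbm, if_pos hbm]
      have hsw : τ0 * Equiv.swap mh (τ0⁻¹ b) = τ0 := by
        rw [hbm, hτi, Equiv.swap_self, ← Equiv.Perm.one_def, mul_one]
      rw [hsw, smul_smul]
    · rw [if_neg hbm, if_neg hbm]
      have hneq : mh ≠ τ0⁻¹ b := by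
        intro h
        exact hbm (by rw [show b = τ0 (τ0⁻¹ b) from (Equiv.Perm.apply_inv_self _ _).symm,
          ← h, hτ0])
      have hsgn : Equiv.Perm.sign (τ0 * Equiv.swap mh (τ0⁻¹ b))
          = - Equiv.Perm.sign τ0 := by
        rw [Equiv.Perm.sign_mul, Equiv.Perm.sign_swap hneq, mul_neg_one]
      rw [hsgn, smul_smul]
      congr 1
      push_cast
      ring
  rw [Finset.sum_congr rfl (fun b _ => Finset.sum_congr rfl (fun τ _ => hval b τ)),
    Finset.sum_comm]
  refine Finset.sum_congr rfl (fun τ _ => ?_)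
  have hb_sum : ∀ X1 X2 : M, (∑ b : Fin p, if b = mh then X1 else X2)
      = X1 + (p - 1) • X2 := by
    intro X1 X2
    rw [← Finset.add_sum_erase _ _ (Finset.mem_univ mh), if_pos rfl]
    congr 1
    rw [Finset.sum_congr rfl (fun b hb => if_neg (Finset.ne_of_mem_erase hb)),
      Finset.sum_const, Finset.card_erase_of_mem (Finset.mem_univ mh),
      Finset.card_univ, Fintype.card_fin]
  rw [show (∑ b : Fin p, (if b = mh
        then (((Equiv.Perm.sign τ.1 : ℤˣ) : ℤ) : ℂ) * ((4 * α + 2 * r) * (m : ℂ) ^ 2)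
        else -(((Equiv.Perm.sign τ.1 : ℤˣ) : ℤ) : ℂ) * (2 * (m : ℂ) ^ 2)) •
          ((↑(PPm S i p m h1 h2 τ.1) : Module.End ℂ M) u))
      = ∑ b : Fin p, (if b = mh
        then ((((Equiv.Perm.sign τ.1 : ℤˣ) : ℤ) : ℂ) * ((4 * α + 2 * r) * (m : ℂ) ^ 2)) •
          ((↑(PPm S i p m h1 h2 τ.1) : Module.End ℂ M) u)
        else (-(((Equiv.Perm.sign τ.1 : ℤˣ) : ℤ) : ℂ) * (2 * (m : ℂ) ^ 2)) •
          ((↑(PPm S i p m h1 h2 τ.1) : Module.End ℂ M) u))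
      from Finset.sum_congr rfl (fun b _ => by split <;> rfl), hb_sum]
  have hp1 : ((p - 1 : ℕ) : ℂ) = (p : ℂ) - 1 := by
    have hp : 1 ≤ p := by omega
    push_cast [hp]
    ring
  rw [← Nat.cast_smul_eq_nsmul ℂ (p - 1)
    ((-(((Equiv.Perm.sign τ.1 : ℤˣ) : ℤ) : ℂ) * (2 * (m : ℂ) ^ 2)) •
      ((↑(PPm S i p m h1 h2 τ.1) : Module.End ℂ M) u)), hp1, smul_smul]
  rw [← Int.cast_smul_eq_zsmul ℂ, smul_smul, ← add_smul]
  congr 1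
  rw [hK]
  ring

end Main

/-- let `1 ≤ m ≤ p` and let `u ∈ M_r^{(1)}` satisfy `v(−t,m)·u = 0` for all
`1 ≤ t ≤ p` with `t ≠ m`, and `v(−m,m)·u = αm·u` for some `α ∈ ℂ`.  Then
`v(m,m)·(det V_p)·u = 2m²(2α + r − p + 1)·det(V_p^{(m)})·u + (det V_p)·v(m,m)·u`, where
`V_p^{(m)}` is `V_p` with the `m`-th row and column deleted (its index set being
`{1,…,p} \ {m}`, realized by the strictly monotone map `Fin (p−1) → ℤ` skipping `m`). -/
theorem stmt_18 (d : ℕ) (hd : 2 ≤ d) (r : ℂ) (M : Type*) [AddCommGroup M] [Module ℂ M]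
    (S : LrAlg d r (Module.End ℂ M)) (one : M)
    (hvac : ∀ (i j : Fin d) (m n : ℤ), 0 ≤ m ∨ 0 ≤ n → S.ρ i j m n one = 0)
    (p : ℕ) (m : ℤ) (h1 : 1 ≤ m) (h2 : m ≤ (p : ℤ)) (u : M) (α : ℂ)
    (hu1 : ∀ t : ℤ, 1 ≤ t → t ≤ (p : ℤ) → t ≠ m →
      S.ρ (⟨0, by omega⟩ : Fin d) ⟨0, by omega⟩ (-t) m u = 0)
    (hu2 : S.ρ (⟨0, by omega⟩ : Fin d) ⟨0, by omega⟩ (-m) m u = (α * (m : ℂ)) • u) :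
    S.ρ ⟨0, by omega⟩ ⟨0, by omega⟩ m m
        ((detOn (fun a b => S.ρ (⟨0, by omega⟩ : Fin d) ⟨0, by omega⟩ a b)
            (fun q : Fin p => (q : ℤ) + 1)) u)
      = (2 * (m : ℂ) ^ 2 * (2 * α + r - (p : ℂ) + 1)) •
          ((detOn (fun a b => S.ρ (⟨0, by omega⟩ : Fin d) ⟨0, by omega⟩ a b)
              (fun q : Fin (p - 1) => if (q : ℤ) + 1 < m then (q : ℤ) + 1 else (q : ℤ) + 2)) u)
        + (detOn (fun a b => S.ρ (⟨0, by omega⟩ : Fin d) ⟨0, by omega⟩ a b)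
            (fun q : Fin p => (q : ℤ) + 1))
            (S.ρ ⟨0, by omega⟩ ⟨0, by omega⟩ m m u) := by
  exact master S (⟨0, by omega⟩ : Fin d) p m h1 h2 h1 u α
    (fun t ht1 ht2 htm => hu1 t ht1 ht2 htm) hu2
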